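/- Let T be the union over a partition S_1,…,S_ℓ of S of GMM-EXT(S_i, k, k') with k' = (16/ε')^D·k, in a metric space of doubling dimension D, 0 < ε' ≤ 1. Then for any k-subset X ⊆ S there exists an injective function p : X → T with d(x, p(x)) ≤ (ε'/2)·ρ*_k for all x ∈ X. -/

import Mathlib

open Metric

variable {α : Type*} [MetricSpace α]

/-- `ρ` is the optimal farness of `S` w.r.t. `k`. -/
def IsOptFarness (S : Finset α) (k : ℕ) (ρ : ℝ) : Prop :=
  (∃ U ⊆ S, U.card = k ∧ ∀ x ∈ U, ∀ y ∈ U, x ≠ y → ρ ≤ dist x y) ∧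
  (∀ U ⊆ S, U.card = k → ∃ x ∈ U, ∃ y ∈ U, x ≠ y ∧ dist x y ≤ ρ)

/-- Iterated doubling: a ball of radius `r` is covered by `2^(D*m)` balls of radius `r/2^m`. -/
private lemma iter_double [DecidableEq α] (D : ℕ)
    (hdouble : ∀ (x : α) (r : ℝ), ∃ F : Finset α, F.card ≤ 2 ^ D ∧
      closedBall x r ⊆ ⋃ c ∈ F, closedBall c (r / 2)) :
    ∀ (m : ℕ) (x : α) (r : ℝ), ∃ F : Finset α, F.card ≤ 2 ^ (D * m) ∧
      closedBall x r ⊆ ⋃ c ∈ F, closedBall c (r / 2 ^ m) := by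
  intro m
  induction m with
  | zero =>
    intro x r
    refine ⟨{x}, by simp, ?_⟩
    intro y hy
    refine Set.mem_iUnion₂.mpr ⟨x, Finset.mem_singleton_self x, ?_⟩
    simpa using hy
  | succ m ih =>
    intro x r
    obtain ⟨F, hFc, hFcov⟩ := ih x r
    choose G hGc hGcov using fun c : α => hdouble c (r / 2 ^ m)
    refine ⟨F.biUnion G, ?_, ?_⟩
    · calc (F.biUnion G).card ≤ F.card * 2 ^ D :=
            Finset.card_biUnion_le_card_mul _ _ _ fun a _ => hGc a
        _ ≤ 2 ^ (D * m) * 2 ^ D := Nat.mul_le_mul_right _ hFc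
        _ = 2 ^ (D * (m + 1)) := by rw [← pow_add]; ring_nf
    · intro y hy
      obtain ⟨cc, hcc, hycc⟩ := Set.mem_iUnion₂.mp (hFcov hy)
      obtain ⟨d, hd, hyd⟩ := Set.mem_iUnion₂.mp (hGcov cc hycc)
      refine Set.mem_iUnion₂.mpr ⟨d, Finset.mem_biUnion.mpr ⟨cc, hcc, hd⟩, ?_⟩
      have h2 : r / 2 ^ m / 2 = r / 2 ^ (m + 1) := by
        rw [div_div, ← pow_succ]
      rwa [h2] at hyd

/-- Counting separated points covered by small balls. -/
private lemma sep_count (P F : Finset α) (s : ℝ)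
    (hsep : ∀ p ∈ P, ∀ q ∈ P, p ≠ q → 2 * s < dist p q)
    (hcov : ∀ p, ∃ f, p ∈ P → f ∈ F ∧ dist p f ≤ s) :
    P.card ≤ F.card := by
  choose g hg using hcov
  refine Finset.card_le_card_of_injOn g (fun p hp => (hg p hp).1) ?_
  intro p hp q hq hpq
  rw [Finset.mem_coe] at hp hq
  by_contra hne
  have h1 := (hg p hp).2
  have h2 := (hg q hq).2
  have h3 := hsep p hp q hq hne
  have h4 : dist p q ≤ dist p (g p) + dist (g q) q := by
    rw [hpq]
    exact dist_triangle p (g q) q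
  rw [dist_comm (g q) q] at h4
  linarith

/-- Let `T = ⋃ᵢ GMM-EXT(Sᵢ, k, k')` where `S₁,…,S_ℓ` partition `S`, in a space of
doubling dimension `D`, with `k' ≥ (16/ε')^D·k`: each part `Sᵢ` is clustered around
its greedy kernel `c i 0,…,c i (k'-1)` by nearest kernel point, and `E i j` retains
`min(|C i j|, k)` points of cluster `C i j`. Then any k-subset `X ⊆ S` admits an
injective proxy `p : X → T` with `d(x,p(x)) ≤ (ε'/2)·ρ*_k`. -/
theorem stmt_11 [DecidableEq α] (D : ℕ)
    (hdouble : ∀ (x : α) (r : ℝ), ∃ F : Finset α, F.card ≤ 2 ^ D ∧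
      closedBall x r ⊆ ⋃ c ∈ F, closedBall c (r / 2))
    (ℓ k k' : ℕ) (ε' ρ : ℝ) (hε' : 0 < ε') (hε1 : ε' ≤ 1)
    (hk : 0 < k) (hk' : (16 / ε') ^ D * k ≤ (k' : ℝ))
    (Ss : Fin ℓ → Finset α) (S : Finset α)
    (hS : S = Finset.univ.biUnion Ss)
    (hdisj : ∀ i j, i ≠ j → Disjoint (Ss i) (Ss j))
    (c : Fin ℓ → ℕ → α)
    (hmem : ∀ i, ∀ j < k', c i j ∈ Ss i)
    (hgreedy : ∀ i, ∀ j, ∀ hj : 0 < j, j < k' → ∀ q ∈ Ss i,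
      ((Finset.range j).inf' (Finset.nonempty_range_iff.mpr hj.ne')
        fun t => dist q (c i t)) ≤
      ((Finset.range j).inf' (Finset.nonempty_range_iff.mpr hj.ne')
        fun t => dist (c i j) (c i t)))
    (Cl E : Fin ℓ → ℕ → Finset α)
    (hClsub : ∀ i, ∀ j < k', Cl i j ⊆ Ss i)
    (hClpart : ∀ i, ∀ q ∈ Ss i, ∃! j, j < k' ∧ q ∈ Cl i j)
    (hClnear : ∀ i, ∀ j < k', ∀ q ∈ Cl i j, ∀ j' < k', dist q (c i j) ≤ dist q (c i j'))
    (hEsub : ∀ i, ∀ j < k', E i j ⊆ Cl i j)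
    (hEcard : ∀ i, ∀ j < k', (E i j).card = min (Cl i j).card k)
    (T : Finset α)
    (hT : T = Finset.univ.biUnion fun i => (Finset.range k').biUnion fun j => E i j)
    (hρ : IsOptFarness S k ρ) :
    ∀ X ⊆ S, X.card = k →
      ∃ p : α → α, Set.InjOn p ↑X ∧ (∀ x ∈ X, p x ∈ T) ∧
        ∀ x ∈ X, dist x (p x) ≤ (ε' / 2) * ρ := by
  classical
  intro X hXS hXcard
  have hXne : X.Nonempty := Finset.card_pos.mp (by rw [hXcard]; exact hk)
  obtain ⟨x₀, hx₀⟩ := hXne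
  have hNE : Nonempty α := ⟨x₀⟩
  obtain ⟨a0, ha0X, b0, hb0X, hab0, hdab0⟩ := hρ.2 X hXS hXcard
  have hρ0 : 0 ≤ ρ := dist_nonneg.trans hdab0
  -- choice of m : 8/ε' ≤ 2^m < 16/ε'
  have h8ε : (8:ℝ) ≤ 8 / ε' := by
    rw [le_div_iff₀ hε']; nlinarith
  have hn8 : (8:ℝ) ≤ (⌈(8:ℝ)/ε'⌉₊ : ℝ) := h8ε.trans (Nat.le_ceil _)
  have hn1 : 1 < ⌈(8:ℝ)/ε'⌉₊ := by exact_mod_cast (by linarith : (1:ℝ) < (⌈(8:ℝ)/ε'⌉₊:ℝ))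
  set m : ℕ := Nat.clog 2 ⌈(8:ℝ)/ε'⌉₊ with hm
  have hnm : ⌈(8:ℝ)/ε'⌉₊ ≤ 2 ^ m := Nat.le_pow_clog one_lt_two _
  have h2m_lo : (8:ℝ) / ε' ≤ 2 ^ m := by
    calc (8:ℝ)/ε' ≤ (⌈(8:ℝ)/ε'⌉₊:ℝ) := Nat.le_ceil _
      _ ≤ ((2 ^ m : ℕ) : ℝ) := by exact_mod_cast hnm
      _ = 2 ^ m := by push_cast; ring
  have h2m_hi : (2:ℝ) ^ m < 16 / ε' := by
    have hm1 : 1 ≤ m := by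
      by_contra h
      push_neg at h
      have hm0 : m = 0 := by omega
      have hle : ⌈(8:ℝ)/ε'⌉₊ ≤ 1 := by simpa [hm0] using hnm
      omega
    have hpred : 2 ^ (m - 1) < ⌈(8:ℝ)/ε'⌉₊ := Nat.pow_pred_clog_lt_self one_lt_two hn1
    have hhalf : 2 ^ m = 2 * 2 ^ (m - 1) := by
      rw [← pow_succ']
      congr 1
      omega
    have hceil : (⌈(8:ℝ)/ε'⌉₊:ℝ) < 8/ε' + 1 := Nat.ceil_lt_add_one (by positivity)
    have h2 : (2:ℝ) ^ m ≤ 2 * ((⌈(8:ℝ)/ε'⌉₊:ℝ) - 1) := by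
      have : (2:ℕ) ^ m ≤ 2 * (⌈(8:ℝ)/ε'⌉₊ - 1) := by omega
      have h3 : ((2 ^ m : ℕ):ℝ) ≤ ((2 * (⌈(8:ℝ)/ε'⌉₊ - 1) : ℕ):ℝ) := by exact_mod_cast this
      push_cast [Nat.cast_sub (by omega : 1 ≤ ⌈(8:ℝ)/ε'⌉₊)] at h3
      linarith
    have h16 : (16:ℝ)/ε' = 2 * (8/ε') := by ring
    rw [h16]
    linarith
  have h2mpos : (0:ℝ) < 2 ^ m := by positivity
  -- key geometric lemma: every point is within ε'ρ/4 of some kernel point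
  have hrad : ∀ (i : Fin ℓ), ∀ q ∈ Ss i, ∃ t < k', dist q (c i t) ≤ ε' * ρ / 4 := by
    intro i q hq
    by_contra hcon
    push_neg at hcon
    -- pairwise separation of kernel points
    have hsep : ∀ t j, t < j → j < k' → ε' * ρ / 4 < dist (c i j) (c i t) := by
      intro t j htj hjk'
      have hj0 : 0 < j := lt_of_le_of_lt (Nat.zero_le t) htj
      have h1 := hgreedy i j hj0 hjk' q hq
      have h2 : ε' * ρ / 4 <
          (Finset.range j).inf' (Finset.nonempty_range_iff.mpr hj0.ne')
            fun t => dist q (c i t) := by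
        rw [Finset.lt_inf'_iff]
        intro b hb
        exact hcon b (lt_trans (Finset.mem_range.mp hb) hjk')
      have h3 : ((Finset.range j).inf' (Finset.nonempty_range_iff.mpr hj0.ne')
          fun t => dist (c i j) (c i t)) ≤ dist (c i j) (c i t) :=
        Finset.inf'_le _ (Finset.mem_range.mpr htj)
      linarith
    -- maximal ρ-separated subset V of S, |V| < k, covering S by ρ-balls
    have hSne : S.Nonempty := ⟨x₀, hXS hx₀⟩
    set Pcal := S.powerset.filter (fun V => ∀ x ∈ V, ∀ y ∈ V, x ≠ y → ρ < dist x y) with hPcal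
    have hempty : (∅ : Finset α) ∈ Pcal := by simp [hPcal]
    obtain ⟨V, hVPcal, hVmax⟩ := Finset.exists_max_image Pcal Finset.card ⟨∅, hempty⟩
    have hVS : V ⊆ S := Finset.mem_powerset.mp (Finset.mem_filter.mp hVPcal).1
    have hVsep : ∀ x ∈ V, ∀ y ∈ V, x ≠ y → ρ < dist x y := (Finset.mem_filter.mp hVPcal).2
    have hVk : V.card < k := by
      by_contra h
      push_neg at h
      obtain ⟨U, hUV, hUcard⟩ := Finset.exists_subset_card_eq h
      obtain ⟨a, haU, b, hbU, hab, hdab⟩ := hρ.2 U (hUV.trans hVS) hUcard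
      exact absurd hdab (not_le.mpr (hVsep a (hUV haU) b (hUV hbU) hab))
    have hVcov : ∀ q' ∈ S, ∃ v ∈ V, dist q' v ≤ ρ := by
      intro q' hq'S
      by_contra h
      push_neg at h
      have hq'V : q' ∉ V := by
        intro hq'V
        have := h q' hq'V
        rw [dist_self] at this
        linarith
      have hins : insert q' V ∈ Pcal := by
        rw [hPcal, Finset.mem_filter, Finset.mem_powerset]
        refine ⟨Finset.insert_subset hq'S hVS, ?_⟩
        intro x hx y hy hxy
        rcases Finset.mem_insert.mp hx with rfl | hx'
        · rcases Finset.mem_insert.mp hy with rfl | hy'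
          · exact absurd rfl hxy
          · exact h y hy'
        · rcases Finset.mem_insert.mp hy with rfl | hy'
          · rw [dist_comm]; exact h x hx'
          · exact hVsep x hx' y hy' hxy
      have hc := hVmax _ hins
      rw [Finset.card_insert_of_notMem hq'V] at hc
      omega
    -- cover each ρ-ball by 2^(D*m) balls of radius ρ/2^m
    choose Fv hFvc hFvcov using fun v : α => iter_double D hdouble m v ρ
    set G := V.biUnion Fv with hG
    have hGcard : G.card ≤ V.card * 2 ^ (D * m) :=
      Finset.card_biUnion_le_card_mul _ _ _ fun v _ => hFvc v
    set P := (Finset.range k').image (c i) with hP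
    have h2s : 2 * (ρ / 2 ^ m) ≤ ε' * ρ / 4 := by
      have h8 : (8:ℝ) ≤ ε' * 2 ^ m := by
        rw [div_le_iff₀ hε'] at h2m_lo
        linarith [mul_comm ε' ((2:ℝ)^m)]
      rw [show (2:ℝ) * (ρ / 2 ^ m) = (2 * ρ) / 2 ^ m by ring,
        div_le_div_iff₀ h2mpos (by norm_num : (0:ℝ) < 4)]
      nlinarith [mul_nonneg hρ0 (by linarith : (0:ℝ) ≤ ε' * 2 ^ m - 8)]
    have hPsep : ∀ p ∈ P, ∀ q' ∈ P, p ≠ q' → 2 * (ρ / 2 ^ m) < dist p q' := by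
      intro p hp q' hq' hpq
      obtain ⟨t, ht, rfl⟩ := Finset.mem_image.mp hp
      obtain ⟨u, hu, rfl⟩ := Finset.mem_image.mp hq'
      rw [Finset.mem_range] at ht hu
      rcases lt_trichotomy t u with h | h | h
      · have := hsep t u h hu
        rw [dist_comm]
        linarith
      · exact absurd (by rw [h]) hpq
      · have := hsep u t h ht
        linarith
    have hPcov : ∀ p, ∃ g, p ∈ P → g ∈ G ∧ dist p g ≤ ρ / 2 ^ m := by
      intro p
      by_cases hp : p ∈ P
      · obtain ⟨t, ht, rfl⟩ := Finset.mem_image.mp hp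
        have hpS : c i t ∈ S := by
          rw [hS]
          exact Finset.mem_biUnion.mpr ⟨i, Finset.mem_univ _, hmem i t (Finset.mem_range.mp ht)⟩
        obtain ⟨v, hvV, hdv⟩ := hVcov _ hpS
        have hball : c i t ∈ closedBall v ρ := mem_closedBall.mpr hdv
        obtain ⟨d, hd, hdball⟩ := Set.mem_iUnion₂.mp (hFvcov v hball)
        exact ⟨d, fun _ => ⟨Finset.mem_biUnion.mpr ⟨v, hvV, hd⟩, mem_closedBall.mp hdball⟩⟩
      · exact ⟨p, fun h => absurd h hp⟩
    have hPcard : P.card = k' := by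
      rw [hP, Finset.card_image_of_injOn, Finset.card_range]
      intro t ht u hu htu
      rw [Finset.mem_coe, Finset.mem_range] at ht hu
      by_contra hne
      have h0 : (0:ℝ) ≤ ε' * ρ / 4 := by positivity
      rcases Nat.lt_or_ge t u with h | h
      · have := hsep t u h hu
        rw [htu, dist_self] at this
        linarith
      · have h' : u < t := lt_of_le_of_ne h (Ne.symm hne)
        have := hsep u t h' ht
        rw [htu, dist_self] at this
        linarith
    have hcount := sep_count P G (ρ / 2 ^ m) hPsep hPcov
    -- numeric contradiction
    have h2 : (k : ℝ) * 2 ^ (D * m) ≤ (k' : ℝ) := by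
      calc (k:ℝ) * 2 ^ (D * m) = ((2:ℝ) ^ m) ^ D * k := by
            rw [← pow_mul, mul_comm m D]; ring
        _ ≤ (16/ε')^D * k := by
            apply mul_le_mul_of_nonneg_right _ (Nat.cast_nonneg k)
            exact pow_le_pow_left₀ (by positivity) h2m_hi.le D
        _ ≤ k' := hk'
    have h2n : k * 2 ^ (D * m) ≤ k' := by
      have : ((k * 2 ^ (D * m) : ℕ) : ℝ) ≤ (k' : ℝ) := by push_cast; linarith
      exact_mod_cast this
    have h1 : k' ≤ (k - 1) * 2 ^ (D * m) := by
      calc k' = P.card := hPcard.symm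
        _ ≤ G.card := hcount
        _ ≤ V.card * 2 ^ (D * m) := hGcard
        _ ≤ (k - 1) * 2 ^ (D * m) := Nat.mul_le_mul_right _ (by omega)
    have hApos : 0 < 2 ^ (D * m) := pow_pos (by norm_num) _
    have : k * 2 ^ (D * m) ≤ (k - 1) * 2 ^ (D * m) := le_trans h2n h1
    have hkk := Nat.le_of_mul_le_mul_right this hApos
    omega
  -- cluster radius bound
  have hclrad : ∀ (i : Fin ℓ) (j : ℕ), j < k' → ∀ q ∈ Cl i j, dist q (c i j) ≤ ε' * ρ / 4 := by
    intro i j hj q hq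
    obtain ⟨t, ht, hdt⟩ := hrad i q (hClsub i j hj hq)
    exact (hClnear i j hj q hq t ht).trans hdt
  -- index functions
  have hidx0 : ∀ x ∈ X, ∃ i : Fin ℓ, x ∈ Ss i := by
    intro x hx
    have hxS := hXS hx
    rw [hS] at hxS
    obtain ⟨i, _, hi⟩ := Finset.mem_biUnion.mp hxS
    exact ⟨i, hi⟩
  have hNEι : Nonempty (Fin ℓ) := ⟨(hidx0 x₀ hx₀).choose⟩
  obtain ⟨idx, hidxm⟩ : ∃ idx : α → Fin ℓ, ∀ x ∈ X, x ∈ Ss (idx x) := by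
    refine ⟨fun x => if h : ∃ i : Fin ℓ, x ∈ Ss i then h.choose else Classical.arbitrary _, ?_⟩
    intro x hx
    have h := hidx0 x hx
    simp only [dif_pos h]
    exact h.choose_spec
  obtain ⟨jdx, hjdx1, hjdx2⟩ : ∃ jdx : α → ℕ,
      (∀ x ∈ X, jdx x < k') ∧ ∀ x ∈ X, x ∈ Cl (idx x) (jdx x) := by
    refine ⟨fun x => if h : ∃ j, j < k' ∧ x ∈ Cl (idx x) j then h.choose else 0, ?_, ?_⟩
    · intro x hx
      have h : ∃ j, j < k' ∧ x ∈ Cl (idx x) j := (hClpart (idx x) x (hidxm x hx)).exists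
      simp only [dif_pos h]
      exact h.choose_spec.1
    · intro x hx
      have h : ∃ j, j < k' ∧ x ∈ Cl (idx x) j := (hClpart (idx x) x (hidxm x hx)).exists
      simp only [dif_pos h]
      exact h.choose_spec.2
  -- per-cluster injections into E
  have hfex : ∀ (i : Fin ℓ) (j : ℕ), ∃ f : α → α, j < k' →
      Set.InjOn f ↑(X ∩ Cl i j) ∧ ∀ x ∈ X ∩ Cl i j, f x ∈ E i j := by
    intro i j
    by_cases hj : j < k'
    · have hcard : (X ∩ Cl i j).card ≤ (E i j).card := by
        rw [hEcard i j hj]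
        exact le_min (Finset.card_le_card Finset.inter_subset_right)
          (le_trans (Finset.card_le_card Finset.inter_subset_left) (le_of_eq hXcard))
      have hle : (↑(X ∩ Cl i j) : Set α).encard ≤ (↑(E i j) : Set α).encard := by
        rw [Set.encard_coe_eq_coe_finsetCard, Set.encard_coe_eq_coe_finsetCard]
        exact_mod_cast hcard
      obtain ⟨g, hg1, hg2⟩ := Set.Finite.exists_injOn_of_encard_le
        (X ∩ Cl i j).finite_toSet hle
      refine ⟨g, fun _ => ⟨hg2, fun x hx => ?_⟩⟩
      have := hg1 (Finset.mem_coe.mpr hx)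
      simpa using this
    · exact ⟨id, fun h => absurd h hj⟩
  choose f hf using hfex
  refine ⟨fun x => f (idx x) (jdx x) x, ?_, ?_, ?_⟩
  · -- injectivity
    intro x hx y hy hpxy0
    have hpxy : f (idx x) (jdx x) x = f (idx y) (jdx y) y := hpxy0
    rw [Finset.mem_coe] at hx hy
    have hjx := hjdx1 x hx
    have hjy := hjdx1 y hy
    have hxCl := hjdx2 x hx
    have hyCl := hjdx2 y hy
    have hpxE : f (idx x) (jdx x) x ∈ E (idx x) (jdx x) :=
      (hf _ _ hjx).2 x (Finset.mem_inter.mpr ⟨hx, hxCl⟩)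
    have hpyE : f (idx y) (jdx y) y ∈ E (idx y) (jdx y) :=
      (hf _ _ hjy).2 y (Finset.mem_inter.mpr ⟨hy, hyCl⟩)
    have hpxCl := hEsub _ _ hjx hpxE
    have hpyCl := hEsub _ _ hjy hpyE
    have hpxS := hClsub _ _ hjx hpxCl
    have hpyS := hClsub _ _ hjy hpyCl
    have hieq : idx x = idx y := by
      by_contra hne
      have hd := hdisj _ _ hne
      have hpxS' : f (idx y) (jdx y) y ∈ Ss (idx x) := by rw [← hpxy]; exact hpxS
      exact (Finset.disjoint_left.mp hd hpxS') hpyS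
    have hjeq : jdx x = jdx y := by
      obtain ⟨j₀, hj₀, huniq⟩ := hClpart (idx x) (f (idx x) (jdx x) x) hpxS
      have h1 := huniq (jdx x) ⟨hjx, hpxCl⟩
      have h2 := huniq (jdx y) ⟨hjy, by rw [hpxy, hieq]; exact hpyCl⟩
      rw [h1, h2]
    have hyCl' : y ∈ Cl (idx x) (jdx x) := by rw [hieq, hjeq]; exact hyCl
    have heq2 : f (idx x) (jdx x) x = f (idx x) (jdx x) y := by
      rw [hpxy, hieq, hjeq]
    exact (hf (idx x) (jdx x) hjx).1
      (Finset.mem_coe.mpr (Finset.mem_inter.mpr ⟨hx, hxCl⟩))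
      (Finset.mem_coe.mpr (Finset.mem_inter.mpr ⟨hy, hyCl'⟩)) heq2
  · -- membership in T
    intro x hx
    have hjx := hjdx1 x hx
    have hxCl := hjdx2 x hx
    have hpxE : f (idx x) (jdx x) x ∈ E (idx x) (jdx x) :=
      (hf _ _ hjx).2 x (Finset.mem_inter.mpr ⟨hx, hxCl⟩)
    rw [hT]
    exact Finset.mem_biUnion.mpr ⟨idx x, Finset.mem_univ _,
      Finset.mem_biUnion.mpr ⟨jdx x, Finset.mem_range.mpr hjx, hpxE⟩⟩
  · -- distance bound
    intro x hx
    have hjx := hjdx1 x hx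
    have hxCl := hjdx2 x hx
    have hpxE : f (idx x) (jdx x) x ∈ E (idx x) (jdx x) :=
      (hf _ _ hjx).2 x (Finset.mem_inter.mpr ⟨hx, hxCl⟩)
    have hpxCl := hEsub _ _ hjx hpxE
    have h1 := hclrad _ _ hjx x hxCl
    have h2 := hclrad _ _ hjx _ hpxCl
    have htri := dist_triangle x (c (idx x) (jdx x)) (f (idx x) (jdx x) x)
    rw [dist_comm (c (idx x) (jdx x)) (f (idx x) (jdx x) x)] at htri
    linarith
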